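/- With K of characteristic p, G = C_p = \langle g \rangle, and \xi \in (K[G])^* defined by \langle \xi, (g-1)^j \rangle = \delta_{1,j} for 0 \le j \le p-1, one has \xi^p = \xi in the dual algebra (K[G])^*. -/

import Mathlib

open TensorProduct

/-- Comultiplication on a group algebra, `g ↦ g ⊗ g`. -/
noncomputable def gaComul (K G : Type*) [CommRing K] [Monoid G] :
    MonoidAlgebra K G →ₐ[K] (MonoidAlgebra K G ⊗[K] MonoidAlgebra K G) :=
  MonoidAlgebra.lift K _ G
    { toFun := fun g => MonoidAlgebra.of K G g ⊗ₜ[K] MonoidAlgebra.of K G g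
      map_one' := by
        simp [← MonoidAlgebra.one_def, Algebra.TensorProduct.one_def]
      map_mul' := fun a b => by
        simp [Algebra.TensorProduct.tmul_mul_tmul] }

/-- Counit on a group algebra, `g ↦ 1`. -/
noncomputable def gaCounit (K G : Type*) [CommRing K] [Monoid G] :
    MonoidAlgebra K G →ₐ[K] K :=
  MonoidAlgebra.lift K K G 1

/-- Convolution product of linear functionals on a group algebra, dual to the
coalgebra structure `Δ(g) = g ⊗ g`. -/
noncomputable def gaConv {K G : Type*} [CommRing K] [Monoid G]
    (f g : MonoidAlgebra K G →ₗ[K] K) : MonoidAlgebra K G →ₗ[K] K :=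
  (LinearMap.mul' K K).comp ((TensorProduct.map f g).comp (gaComul K G).toLinearMap)

/-- Convolution powers of a functional; the 0-th power is the unit `ε` of the dual
algebra. -/
noncomputable def gaConvPow {K G : Type*} [CommRing K] [Monoid G]
    (f : MonoidAlgebra K G →ₗ[K] K) : ℕ → (MonoidAlgebra K G →ₗ[K] K)
  | 0 => (gaCounit K G).toLinearMap
  | n + 1 => gaConv f (gaConvPow f n)

section Aux
variable {K G : Type*} [CommRing K] [Monoid G]

lemma gaComul_of (a : G) : gaComul K G (MonoidAlgebra.of K G a)
    = MonoidAlgebra.of K G a ⊗ₜ[K] MonoidAlgebra.of K G a := by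
  simp [gaComul]

lemma gaCounit_of (a : G) : gaCounit K G (MonoidAlgebra.of K G a) = 1 := by
  simp [gaCounit]

lemma gaConv_of (f h : MonoidAlgebra K G →ₗ[K] K) (a : G) :
    gaConv f h (MonoidAlgebra.of K G a)
      = f (MonoidAlgebra.of K G a) * h (MonoidAlgebra.of K G a) := by
  simp only [gaConv, LinearMap.comp_apply, AlgHom.toLinearMap_apply, gaComul_of,
    TensorProduct.map_tmul, LinearMap.mul'_apply]

lemma gaConvPow_of (f : MonoidAlgebra K G →ₗ[K] K) (n : ℕ) (a : G) :
    gaConvPow f n (MonoidAlgebra.of K G a) = f (MonoidAlgebra.of K G a) ^ n := by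
  induction n with
  | zero => simpa [gaConvPow] using gaCounit_of (K := K) a
  | succ n ih => rw [gaConvPow, gaConv_of, ih, pow_succ]; ring

end Aux


/-- for `ξ ∈ (K[C_p])^*` with `⟨ξ, (g-1)^j⟩ = δ_{1,j}`, one has
`ξ^p = ξ` in the dual (convolution) algebra. -/
theorem stmt_14 (p : ℕ) [Fact p.Prime] {K : Type*} [Field K] [CharP K p]
    (ξ : MonoidAlgebra K (Multiplicative (ZMod p)) →ₗ[K] K)
    (hξ : ∀ j : ℕ, j ≤ p - 1 →
      ξ ((MonoidAlgebra.of K (Multiplicative (ZMod p))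
          (Multiplicative.ofAdd (1 : ZMod p)) - 1) ^ j) = if j = 1 then 1 else 0) :
    gaConvPow ξ p = ξ := by
  have hp : p.Prime := Fact.out
  set g := MonoidAlgebra.of K (Multiplicative (ZMod p)) (Multiplicative.ofAdd (1 : ZMod p))
    with hgdef
  -- ξ (g ^ n) = n for n ≤ p - 1
  have key : ∀ n : ℕ, n ≤ p - 1 → ξ (g ^ n) = (n : K) := by
    intro n hn
    have hgn : g ^ n = ((g - 1) + 1) ^ n := by ring_nf
    rw [hgn, add_pow, map_sum]
    have : ∀ k ∈ Finset.range (n + 1),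
        ξ ((g - 1) ^ k * 1 ^ (n - k) * (n.choose k : MonoidAlgebra K (Multiplicative (ZMod p))))
          = (n.choose k : K) * (if k = 1 then 1 else 0) := by
      intro k hk
      have hk' : k ≤ p - 1 := le_trans (Nat.lt_succ_iff.mp (Finset.mem_range.mp hk)) hn
      rw [one_pow, mul_one, mul_comm, ← nsmul_eq_mul, map_nsmul, hξ k hk', nsmul_eq_mul]
    rw [Finset.sum_congr rfl this]
    simp only [mul_ite, mul_one, mul_zero]
    rw [Finset.sum_ite_eq' (Finset.range (n+1)) 1 (fun k => (n.choose k : K))]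
    rcases Nat.eq_zero_or_pos n with h0 | h0
    · simp [h0]
    · rw [if_pos (Finset.mem_range.mpr (by omega))]
      simp [Nat.choose_one_right]
  -- ξ (of a) = val of a
  have hof : ∀ a : Multiplicative (ZMod p),
      ξ (MonoidAlgebra.of K (Multiplicative (ZMod p)) a) = ((a.toAdd.val : ℕ) : K) := by
    intro a
    have hval : ((a.toAdd.val : ℕ) : ZMod p) = a.toAdd := ZMod.natCast_rightInverse a.toAdd
    have hpow : g ^ a.toAdd.val = MonoidAlgebra.of K (Multiplicative (ZMod p)) a := by
      rw [hgdef, ← map_pow]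
      congr 1
      rw [← ofAdd_nsmul, nsmul_eq_mul, mul_one, hval]
      exact ofAdd_toAdd a
    rw [← hpow]
    exact key _ (by have := ZMod.val_lt a.toAdd; omega)
  -- Fermat: (n : K)^p = n
  have fermat : ∀ n : ℕ, (n : K) ^ p = (n : K) := by
    intro n
    have h1 : ((ZMod.castHom (dvd_refl p) K) (n : ZMod p)) = (n : K) := map_natCast _ n
    calc (n : K) ^ p = (ZMod.castHom (dvd_refl p) K) ((n : ZMod p) ^ p) := by
          rw [map_pow, h1]
      _ = (ZMod.castHom (dvd_refl p) K) (n : ZMod p) := by rw [ZMod.pow_card]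
      _ = (n : K) := h1
  -- conclude
  refine MonoidAlgebra.lhom_ext' fun a => LinearMap.ext fun b => ?_
  simp only [LinearMap.comp_apply, MonoidAlgebra.lsingle_apply]
  have hs : (MonoidAlgebra.single a b : MonoidAlgebra K (Multiplicative (ZMod p)))
      = b • MonoidAlgebra.of K (Multiplicative (ZMod p)) a := by
    rw [MonoidAlgebra.smul_of]
  rw [hs, map_smul, map_smul]
  have h3 : ξ (MonoidAlgebra.of K (Multiplicative (ZMod p)) a) ^ p
      = ξ (MonoidAlgebra.of K (Multiplicative (ZMod p)) a) := by
    rw [hof a]; exact fermat _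
  exact congrArg (fun z => b • z) ((gaConvPow_of ξ p a).trans h3)
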